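/- For ε ∈ {+1, −1} let G_ε(s, t) = π^{−s} Γ((s + (1−ε)/2 − it)/2) · Γ((s + (1−ε)/2 + it)/2). Then for every τ ∈ ℝ and every t ∈ ℂ with |Im t| < 1/2, [G_{−1}(1/2 − iτ, t) / G_{−1}(1/2 + iτ, t)] · [G_{+1}(1/2 + iτ, t) / G_{+1}(1/2 − iτ, t)] = (1 − i sinh(πτ)/cosh(πt)) / (1 + i sinh(πτ)/cosh(πt)) = Q_τ(t); in particular all Gamma factors and the denominator cosh(πt) + i sinh(πτ) are nonzero under these hypotheses. -/

import Mathlib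

/-- `G_ε(s, t) = π^{−s} Γ((s + (1−ε)/2 − it)/2) Γ((s + (1−ε)/2 + it)/2)` for `ε = ±1`. -/
noncomputable def Gfac (ε : ℤ) (s t : ℂ) : ℂ :=
  (Real.pi : ℂ) ^ (-s) *
    Complex.Gamma ((s + (1 - ε) / 2 - Complex.I * t) / 2) *
    Complex.Gamma ((s + (1 - ε) / 2 + Complex.I * t) / 2)

lemma sin_mul_sin (A B : ℂ) :
    Complex.sin A * Complex.sin B = (Complex.cos (A - B) - Complex.cos (A + B)) / 2 := by
  rw [Complex.cos_sub, Complex.cos_add]; ring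

lemma ratio_helper (Pm Pp G1 G2 G3 G4 s1 s2 s3 s4 p : ℂ)
    (hPm : Pm ≠ 0) (hPp : Pp ≠ 0) (hG1 : G1 ≠ 0) (hG2 : G2 ≠ 0) (hG3 : G3 ≠ 0) (hG4 : G4 ≠ 0)
    (hs1 : s1 ≠ 0) (hs2 : s2 ≠ 0) (hs3 : s3 ≠ 0) (hs4 : s4 ≠ 0) (hp : p ≠ 0) :
    (Pm * (p / (s1 * G1)) * (p / (s2 * G2)) / (Pp * (p / (s3 * G3)) * (p / (s4 * G4)))) *
      (Pp * G2 * G1 / (Pm * G4 * G3)) = (s3 * s4) / (s1 * s2) := by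
  rw [div_mul_div_comm, div_eq_div_iff]
  · field_simp
  · exact mul_ne_zero (mul_ne_zero (mul_ne_zero hPp (div_ne_zero hp (mul_ne_zero hs3 hG3)))
      (div_ne_zero hp (mul_ne_zero hs4 hG4))) (mul_ne_zero (mul_ne_zero hPm hG4) hG3)
  · exact mul_ne_zero hs1 hs2

/-- For `τ ∈ ℝ` and `|Im t| < 1/2`, the ratio of Gamma factors equals
`Q_τ(t) = (1 − i sinh(πτ)/cosh(πt))/(1 + i sinh(πτ)/cosh(πt))`; in particular all the
Gamma factors and the denominator `cosh(πt) + i sinh(πτ)` are nonzero. -/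
theorem gamma_ratio_eq_Q (τ : ℝ) (t : ℂ) (ht : |t.im| < 1 / 2) :
    Gfac (-1) (1 / 2 - Complex.I * τ) t ≠ 0 ∧
    Gfac (-1) (1 / 2 + Complex.I * τ) t ≠ 0 ∧
    Gfac 1 (1 / 2 + Complex.I * τ) t ≠ 0 ∧
    Gfac 1 (1 / 2 - Complex.I * τ) t ≠ 0 ∧
    Complex.cosh (Real.pi * t) ≠ 0 ∧
    Complex.cosh (Real.pi * t) + Complex.I * (Real.sinh (Real.pi * τ) : ℂ) ≠ 0 ∧
    (Gfac (-1) (1 / 2 - Complex.I * τ) t / Gfac (-1) (1 / 2 + Complex.I * τ) t) *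
        (Gfac 1 (1 / 2 + Complex.I * τ) t / Gfac 1 (1 / 2 - Complex.I * τ) t)
      = (1 - Complex.I * (Real.sinh (Real.pi * τ) : ℂ) / Complex.cosh (Real.pi * t)) /
          (1 + Complex.I * (Real.sinh (Real.pi * τ) : ℂ) / Complex.cosh (Real.pi * t)) := by
  obtain ⟨htl, htr⟩ := abs_lt.mp ht
  have hπ : (Real.pi : ℂ) ≠ 0 := Complex.ofReal_ne_zero.mpr Real.pi_ne_zero
  set sp : ℂ := 1 / 2 + Complex.I * τ with hsp
  set sm : ℂ := 1 / 2 - Complex.I * τ with hsm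
  set z₁ : ℂ := (sp + Complex.I * t) / 2 with hz₁
  set z₂ : ℂ := (sp - Complex.I * t) / 2 with hz₂
  set w₁ : ℂ := (sm + Complex.I * t) / 2 with hw₁
  set w₂ : ℂ := (sm - Complex.I * t) / 2 with hw₂
  -- real parts
  have rz₁ : z₁.re = (1 / 2 - t.im) / 2 := by
    rw [hz₁, hsp]; simp [Complex.add_re, Complex.mul_re]; ring
  have rz₂ : z₂.re = (1 / 2 + t.im) / 2 := by
    rw [hz₂, hsp]; simp [Complex.add_re, Complex.sub_re, Complex.mul_re]
  have rw₁ : w₁.re = (1 / 2 - t.im) / 2 := by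
    rw [hw₁, hsm]; simp [Complex.add_re, Complex.sub_re, Complex.mul_re]; ring
  have rw₂ : w₂.re = (1 / 2 + t.im) / 2 := by
    rw [hw₂, hsm]; simp [Complex.sub_re, Complex.mul_re]
  -- Gamma nonvanishing
  have hGz₁ : Complex.Gamma z₁ ≠ 0 := Complex.Gamma_ne_zero_of_re_pos (by rw [rz₁]; linarith)
  have hGz₂ : Complex.Gamma z₂ ≠ 0 := Complex.Gamma_ne_zero_of_re_pos (by rw [rz₂]; linarith)
  have hGw₁ : Complex.Gamma w₁ ≠ 0 := Complex.Gamma_ne_zero_of_re_pos (by rw [rw₁]; linarith)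
  have hGw₂ : Complex.Gamma w₂ ≠ 0 := Complex.Gamma_ne_zero_of_re_pos (by rw [rw₂]; linarith)
  have hGz₁' : Complex.Gamma (1 - z₁) ≠ 0 :=
    Complex.Gamma_ne_zero_of_re_pos (by simp [Complex.sub_re, rz₁]; linarith)
  have hGz₂' : Complex.Gamma (1 - z₂) ≠ 0 :=
    Complex.Gamma_ne_zero_of_re_pos (by simp [Complex.sub_re, rz₂]; linarith)
  have hGw₁' : Complex.Gamma (1 - w₁) ≠ 0 :=
    Complex.Gamma_ne_zero_of_re_pos (by simp [Complex.sub_re, rw₁]; linarith)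
  have hGw₂' : Complex.Gamma (1 - w₂) ≠ 0 :=
    Complex.Gamma_ne_zero_of_re_pos (by simp [Complex.sub_re, rw₂]; linarith)
  -- powers of pi nonvanishing
  have hPp : (Real.pi : ℂ) ^ (-sp) ≠ 0 := by
    simp [Complex.cpow_eq_zero_iff, hπ]
  have hPm : (Real.pi : ℂ) ^ (-sm) ≠ 0 := by
    simp [Complex.cpow_eq_zero_iff, hπ]
  -- rewriting the Gfac's
  have g1 : Gfac (-1) sm t =
      (Real.pi : ℂ) ^ (-sm) * Complex.Gamma (1 - z₁) * Complex.Gamma (1 - z₂) := by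
    unfold Gfac
    rw [show (sm + (1 - ((-1 : ℤ) : ℂ)) / 2 - Complex.I * t) / 2 = 1 - z₁ by
          rw [hz₁, hsp, hsm]; push_cast; ring,
        show (sm + (1 - ((-1 : ℤ) : ℂ)) / 2 + Complex.I * t) / 2 = 1 - z₂ by
          rw [hz₂, hsp, hsm]; push_cast; ring]
  have g2 : Gfac (-1) sp t =
      (Real.pi : ℂ) ^ (-sp) * Complex.Gamma (1 - w₁) * Complex.Gamma (1 - w₂) := by
    unfold Gfac
    rw [show (sp + (1 - ((-1 : ℤ) : ℂ)) / 2 - Complex.I * t) / 2 = 1 - w₁ by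
          rw [hw₁, hsp, hsm]; push_cast; ring,
        show (sp + (1 - ((-1 : ℤ) : ℂ)) / 2 + Complex.I * t) / 2 = 1 - w₂ by
          rw [hw₂, hsp, hsm]; push_cast; ring]
  have g3 : Gfac 1 sp t =
      (Real.pi : ℂ) ^ (-sp) * Complex.Gamma z₂ * Complex.Gamma z₁ := by
    unfold Gfac
    rw [show (sp + (1 - ((1 : ℤ) : ℂ)) / 2 - Complex.I * t) / 2 = z₂ by
          rw [hz₂, hsp]; push_cast; ring,
        show (sp + (1 - ((1 : ℤ) : ℂ)) / 2 + Complex.I * t) / 2 = z₁ by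
          rw [hz₁, hsp]; push_cast; ring]
  have g4 : Gfac 1 sm t =
      (Real.pi : ℂ) ^ (-sm) * Complex.Gamma w₂ * Complex.Gamma w₁ := by
    unfold Gfac
    rw [show (sm + (1 - ((1 : ℤ) : ℂ)) / 2 - Complex.I * t) / 2 = w₂ by
          rw [hw₂, hsm]; push_cast; ring,
        show (sm + (1 - ((1 : ℤ) : ℂ)) / 2 + Complex.I * t) / 2 = w₁ by
          rw [hw₁, hsm]; push_cast; ring]
  -- reflection formulas
  have r1 := Complex.Gamma_mul_Gamma_one_sub z₁
  have r2 := Complex.Gamma_mul_Gamma_one_sub z₂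
  have r3 := Complex.Gamma_mul_Gamma_one_sub w₁
  have r4 := Complex.Gamma_mul_Gamma_one_sub w₂
  -- sines nonvanishing
  have sz₁ : Complex.sin (Real.pi * z₁) ≠ 0 := by
    intro h; rw [h, div_zero] at r1; exact mul_ne_zero hGz₁ hGz₁' r1
  have sz₂ : Complex.sin (Real.pi * z₂) ≠ 0 := by
    intro h; rw [h, div_zero] at r2; exact mul_ne_zero hGz₂ hGz₂' r2
  have sw₁ : Complex.sin (Real.pi * w₁) ≠ 0 := by
    intro h; rw [h, div_zero] at r3; exact mul_ne_zero hGw₁ hGw₁' r3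
  have sw₂ : Complex.sin (Real.pi * w₂) ≠ 0 := by
    intro h; rw [h, div_zero] at r4; exact mul_ne_zero hGw₂ hGw₂' r4
  -- solve for Gamma (1 - ·)
  have e1 : Complex.Gamma (1 - z₁) =
      (Real.pi : ℂ) / (Complex.sin (Real.pi * z₁) * Complex.Gamma z₁) := by
    rw [eq_div_iff (mul_ne_zero sz₁ hGz₁)]
    rw [eq_div_iff sz₁] at r1; linear_combination r1
  have e2 : Complex.Gamma (1 - z₂) =
      (Real.pi : ℂ) / (Complex.sin (Real.pi * z₂) * Complex.Gamma z₂) := by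
    rw [eq_div_iff (mul_ne_zero sz₂ hGz₂)]
    rw [eq_div_iff sz₂] at r2; linear_combination r2
  have e3 : Complex.Gamma (1 - w₁) =
      (Real.pi : ℂ) / (Complex.sin (Real.pi * w₁) * Complex.Gamma w₁) := by
    rw [eq_div_iff (mul_ne_zero sw₁ hGw₁)]
    rw [eq_div_iff sw₁] at r3; linear_combination r3
  have e4 : Complex.Gamma (1 - w₂) =
      (Real.pi : ℂ) / (Complex.sin (Real.pi * w₂) * Complex.Gamma w₂) := by
    rw [eq_div_iff (mul_ne_zero sw₂ hGw₂)]
    rw [eq_div_iff sw₂] at r4; linear_combination r4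
  -- sine products
  have Sz : Complex.sin (Real.pi * z₁) * Complex.sin (Real.pi * z₂)
      = (Complex.cosh (Real.pi * t) + Complex.I * (Real.sinh (Real.pi * τ) : ℂ)) / 2 := by
    rw [sin_mul_sin,
      show (Real.pi : ℂ) * z₁ - (Real.pi : ℂ) * z₂ = ((Real.pi : ℂ) * t) * Complex.I by
        rw [hz₁, hz₂, hsp]; ring,
      show (Real.pi : ℂ) * z₁ + (Real.pi : ℂ) * z₂
          = (Real.pi : ℂ) / 2 + ((Real.pi : ℂ) * (τ : ℂ)) * Complex.I by
        rw [hz₁, hz₂, hsp]; ring,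
      Complex.cos_mul_I, Complex.cos_add, Complex.cos_pi_div_two, Complex.sin_pi_div_two,
      Complex.sin_mul_I]
    rw [show ((Real.sinh (Real.pi * τ) : ℝ) : ℂ) = Complex.sinh ((Real.pi : ℂ) * (τ : ℂ)) by
      rw [Complex.ofReal_sinh]; push_cast; ring]
    ring
  have Sw : Complex.sin (Real.pi * w₁) * Complex.sin (Real.pi * w₂)
      = (Complex.cosh (Real.pi * t) - Complex.I * (Real.sinh (Real.pi * τ) : ℂ)) / 2 := by
    rw [sin_mul_sin,
      show (Real.pi : ℂ) * w₁ - (Real.pi : ℂ) * w₂ = ((Real.pi : ℂ) * t) * Complex.I by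
        rw [hw₁, hw₂, hsm]; ring,
      show (Real.pi : ℂ) * w₁ + (Real.pi : ℂ) * w₂
          = (Real.pi : ℂ) / 2 + (-((Real.pi : ℂ) * (τ : ℂ))) * Complex.I by
        rw [hw₁, hw₂, hsm]; ring,
      Complex.cos_mul_I, Complex.cos_add, Complex.cos_pi_div_two, Complex.sin_pi_div_two,
      Complex.sin_mul_I, Complex.sinh_neg]
    rw [show ((Real.sinh (Real.pi * τ) : ℝ) : ℂ) = Complex.sinh ((Real.pi : ℂ) * (τ : ℂ)) by
      rw [Complex.ofReal_sinh]; push_cast; ring]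
    ring
  -- cosh nonvanishing
  have hch : Complex.cosh (Real.pi * t) ≠ 0 := by
    rw [← Complex.cos_mul_I, Complex.cos_ne_zero_iff]
    intro k hk
    have hre := congrArg Complex.re hk
    simp [Complex.mul_re, Complex.mul_im, Complex.div_re] at hre
    -- hre should be a real equation; derive contradiction
    rcases le_or_gt 0 k with hk0 | hk0
    · have : (1 : ℝ) ≤ 2 * (k : ℝ) + 1 := by
        have : (0:ℝ) ≤ (k:ℝ) := by exact_mod_cast hk0
        linarith
      nlinarith [Real.pi_pos]
    · have hk1 : k ≤ -1 := by omega
      have : 2 * (k : ℝ) + 1 ≤ -1 := by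
        have : (k:ℝ) ≤ -1 := by exact_mod_cast hk1
        linarith
      nlinarith [Real.pi_pos]
  -- denominator nonvanishing
  have hden : Complex.cosh (Real.pi * t) + Complex.I * (Real.sinh (Real.pi * τ) : ℂ) ≠ 0 := by
    intro h
    have := mul_ne_zero sz₁ sz₂
    rw [Sz, h] at this
    simp at this
  refine ⟨?_, ?_, ?_, ?_, hch, hden, ?_⟩
  · rw [g1]; exact mul_ne_zero (mul_ne_zero hPm hGz₁') hGz₂'
  · rw [g2]; exact mul_ne_zero (mul_ne_zero hPp hGw₁') hGw₂'
  · rw [g3]; exact mul_ne_zero (mul_ne_zero hPp hGz₂) hGz₁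
  · rw [g4]; exact mul_ne_zero (mul_ne_zero hPm hGw₂) hGw₁
  · rw [g1, g2, g3, g4, e1, e2, e3, e4]
    have L := ratio_helper ((Real.pi : ℂ) ^ (-sm)) ((Real.pi : ℂ) ^ (-sp))
      (Complex.Gamma z₁) (Complex.Gamma z₂) (Complex.Gamma w₁) (Complex.Gamma w₂)
      (Complex.sin (Real.pi * z₁)) (Complex.sin (Real.pi * z₂))
      (Complex.sin (Real.pi * w₁)) (Complex.sin (Real.pi * w₂)) (Real.pi : ℂ)
      hPm hPp hGz₁ hGz₂ hGw₁ hGw₂ sz₁ sz₂ sw₁ sw₂ hπ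
    rw [L, Sz, Sw]
    rw [div_div_div_cancel_right₀]
    · field_simp
    · exact two_ne_zero
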